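/- For every natural number k, a finite simple graph G is a k-threshold graph if and only if there is a coloring of its vertices with k colors and a linear ordering v_1, …, v_n of its vertices such that for each i ≥ 2, either v_i is nonadjacent to all of v_1, …, v_{i−1}, or there is a color j such that v_i is adjacent to exactly the vertices of color j among v_1, …, v_{i−1}. -/

import Mathlib

/-- `G` is a `k`-threshold graph: there is a coloring of the vertices with `k` colors
such that every nonempty vertex subset `W` contains a vertex `x` which is either
isolated in `W`, or whose neighbors inside `W` are exactly the vertices of `W \ {x}`
of some color `i`. -/
def IsKThreshold {V : Type*} (k : ℕ) (G : SimpleGraph V) : Prop :=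
  ∃ c : V → Fin k, ∀ W : Set V, W.Nonempty →
    ∃ x ∈ W, (∀ y ∈ W, ¬ G.Adj x y) ∨
      ∃ i : Fin k, ∀ y ∈ W, y ≠ x → (G.Adj x y ↔ c y = i)

/-- A finite simple graph `G` is a `k`-threshold graph iff there is a coloring of its
vertices with `k` colors and a linear ordering of the vertices (given by `e : Fin n ≃ V`)
such that every vertex is either nonadjacent to all earlier vertices, or adjacent to
exactly the earlier vertices of some color `j`. -/
theorem kThreshold_iff_elimination_order {V : Type*} [Fintype V] (k : ℕ)
    (G : SimpleGraph V) :
    IsKThreshold k G ↔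
      ∃ (n : ℕ) (e : Fin n ≃ V) (c : V → Fin k), ∀ i : Fin n,
        (∀ j : Fin n, j < i → ¬ G.Adj (e i) (e j)) ∨
        ∃ m : Fin k, ∀ j : Fin n, j < i → (G.Adj (e i) (e j) ↔ c (e j) = m) := by
  classical
  constructor
  · rintro ⟨c, hc⟩
    -- build a list by repeated elimination
    have key : ∀ S : Finset V, ∃ L : List V, L.Nodup ∧ L.toFinset = S ∧
        ∀ (i : ℕ) (hi : i < L.length),
          (∀ (j : ℕ) (hj : j < i), ¬ G.Adj (L[i]) (L[j]'(by omega))) ∨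
          ∃ m : Fin k, ∀ (j : ℕ) (hj : j < i),
            (G.Adj (L[i]) (L[j]'(by omega)) ↔ c (L[j]'(by omega)) = m) := by
      intro S
      induction S using Finset.strongInduction with
      | _ S ih =>
        rcases S.eq_empty_or_nonempty with rfl | hS
        · exact ⟨[], by simp, by simp, by simp⟩
        · obtain ⟨x, hxW, hx⟩ := hc (↑S) (by exact_mod_cast hS)
          have hxS : x ∈ S := by exact_mod_cast hxW
          obtain ⟨L', hnd, htf, hP⟩ := ih (S.erase x) (Finset.erase_ssubset hxS)
          have hxL' : x ∉ L' := by
            intro h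
            have : x ∈ S.erase x := by rw [← htf]; simpa using h
            simp at this
          refine ⟨L' ++ [x], ?_, ?_, ?_⟩
          · simp [List.nodup_append, hnd, hxL']
            rintro a ha rfl; exact hxL' ha
          · rw [List.toFinset_append, htf]
            ext y
            simp only [Finset.mem_union, Finset.mem_erase, List.mem_toFinset, List.mem_singleton]
            constructor
            · rintro (⟨_, hy⟩ | rfl) <;> [exact hy; exact hxS]
            · intro hy
              by_cases h' : y = x
              · exact Or.inr h'
              · exact Or.inl ⟨h', hy⟩
          · intro i hi
            simp only [List.length_append, List.length_singleton] at hi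
            rcases lt_or_ge i L'.length with hlt | hge
            · have hget : ∀ (j : ℕ) (hj : j < L'.length),
                  (L' ++ [x])[j]'(by simp; omega) = L'[j] := fun j hj =>
                List.getElem_append_left _
              rcases hP i hlt with h | ⟨m, hm⟩
              · left; intro j hj
                rw [hget i hlt, hget j (by omega)]
                exact h j hj
              · right; exact ⟨m, fun j hj => by
                  rw [hget i hlt, hget j (by omega)]; exact hm j hj⟩
            · have hieq : i = L'.length := by omega
              have hgi : (L' ++ [x])[i]'(by simp; omega) = x := by
                subst hieq; simp
              have hgj : ∀ (j : ℕ) (hj : j < i),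
                  (L' ++ [x])[j]'(by simp; omega) = L'[j]'(by omega) :=
                fun j hj => List.getElem_append_left _
              have hmem : ∀ (j : ℕ) (hj : j < i), (L'[j]'(by omega)) ∈ S.erase x := by
                intro j hj
                rw [← htf]
                simpa using List.getElem_mem _
              rcases hx with h | ⟨m, hm⟩
              · left; intro j hj
                rw [hgi, hgj j hj]
                have := hmem j hj
                exact h _ (by simp at this; exact_mod_cast this.2)
              · right; refine ⟨m, fun j hj => ?_⟩
                rw [hgi, hgj j hj]
                have h2 := hmem j hj
                simp only [Finset.mem_erase] at h2
                exact hm _ (by exact_mod_cast h2.2) h2.1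
    obtain ⟨L, hnd, htf, hP⟩ := key Finset.univ
    have hbij : Function.Bijective (fun i : Fin L.length => L[(i : ℕ)]) := by
      constructor
      · exact fun a b hab => List.nodup_iff_injective_get.mp hnd hab
      · intro v
        have hv : v ∈ L := by
          have : v ∈ L.toFinset := htf ▸ Finset.mem_univ v
          simpa using this
        obtain ⟨i, hi, hvi⟩ := List.mem_iff_getElem.mp hv
        exact ⟨⟨i, hi⟩, hvi⟩
    refine ⟨L.length, Equiv.ofBijective _ hbij, c, fun i => ?_⟩
    rcases hP i i.isLt with h | ⟨m, hm⟩
    · exact Or.inl fun j hj => h j hj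
    · exact Or.inr ⟨m, fun j hj => hm j hj⟩
  · rintro ⟨n, e, c, h⟩
    refine ⟨c, fun W hW => ?_⟩
    have hS : (Finset.univ.filter (fun i : Fin n => e i ∈ W)).Nonempty := by
      obtain ⟨w, hw⟩ := hW
      exact ⟨e.symm w, by simp [hw]⟩
    set S := Finset.univ.filter (fun i : Fin n => e i ∈ W)
    set i := S.max' hS with hi
    have hiW : e i ∈ W := by
      have : i ∈ S := S.max'_mem hS
      simpa [S] using this
    have hlt : ∀ y ∈ W, y ≠ e i → e.symm y < i := by
      intro y hy hne
      have hmem : e.symm y ∈ S := by simp [S, hy]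
      have hle := S.le_max' _ hmem
      rcases lt_or_eq_of_le hle with h' | h'
      · exact h'
      · exact absurd (by rw [hi, ← h']; simp) hne
    refine ⟨e i, hiW, ?_⟩
    rcases h i with h1 | ⟨m, hm⟩
    · left; intro y hy
      by_cases hne : y = e i
      · subst hne; exact G.irrefl
      · have := h1 (e.symm y) (hlt y hy hne)
        simpa using this
    · right; refine ⟨m, fun y hy hne => ?_⟩
      have := hm (e.symm y) (hlt y hy hne)
      simpa using this
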